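/- Counting formula for strongly synchronizing words: for any graph G = (𝕍, E) and p ≥ 1, N(G,p) = Σ_{z = z₁⋯z_l ∈ 𝒯(G)} Σ_{1 = k₁ < k₂ < ⋯ < k_l < k_{l+1} = p+1} Π_{i=1}^{l} i^{k_{i+1}−k_i−1} · β(z₁⋯z_i)^{k_{i+1}−k_i}, where 𝒯(G) is the set of words with pairwise distinct letters forming a permutation of a subset U ⊆ 𝕍 with E(U) ≠ 𝕍, and β(z₁⋯z_i) = #{v ∈ 𝕍 : v not adjacent to any of z₁,...,z_i}. -/

import Mathlib

open Classical

/-- Strong synchronization for a word of length `2p` (0-based indices). -/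
def SS {V : Type*} [Inhabited V] (G : SimpleGraph V) (p : ℕ) (w : List V) : Prop :=
  w.length = 2 * p ∧
    ∀ i j : ℕ, i < p → p ≤ j → j ≤ p + i → ¬ G.Adj (w.getD i default) (w.getD j default)

/-- `β(z)`: number of nodes compatible with no letter of `z`. -/
noncomputable def beta {V : Type*} (G : SimpleGraph V) (z : List V) : ℕ :=
  Nat.card {v : V // ∀ u ∈ z, ¬ G.Adj v u}

/-- The `k`-sequence `1 = k₁ < k₂ < ⋯ < k_l < k_{l+1} = p+1` encoded by the set
`s = {k₂,…,k_l} ⊆ {2,…,p}`, as a list. -/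
def kseq (p : ℕ) (s : Finset ℕ) : List ℕ := (1 :: s.sort (· ≤ ·)) ++ [p + 1]

set_option linter.unusedSectionVars false
set_option linter.unreachableTactic false
set_option linter.unusedTactic false
set_option maxHeartbeats 1000000

section Aux
variable {V : Type*} [Fintype V] [Inhabited V] [DecidableEq V] (G : SimpleGraph V)

noncomputable def NL (V : Type*) [Fintype V] [DecidableEq V] : Finset (List V) :=
  Finset.univ.map (Function.Embedding.subtype (fun l : List V => l.Nodup))

lemma mem_NL (l : List V) : l ∈ NL V ↔ l.Nodup := by simp [NL]

lemma beta_congr {z z' : List V} (h : ∀ u, u ∈ z ↔ u ∈ z') : beta G z = beta G z' := by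
  unfold beta
  exact Nat.card_congr (Equiv.subtypeEquivRight (fun v => by
    constructor <;> intro hv u hu
    · exact hv u ((h u).2 hu)
    · exact hv u ((h u).1 hu)))

lemma beta_eq_zero {z : List V} (h : ¬ ∃ v : V, ∀ u ∈ z, ¬ G.Adj v u) : beta G z = 0 := by
  unfold beta
  have : IsEmpty {v : V // ∀ u ∈ z, ¬ G.Adj v u} := by
    constructor; rintro ⟨v, hv⟩; exact h ⟨v, hv⟩
  simp [Nat.card_of_isEmpty]

def step (z : List V) (a : V) : List V := if a ∈ z then z else z ++ [a]

lemma mem_step (z : List V) (a b : V) : b ∈ step z a ↔ b ∈ z ∨ b = a := by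
  unfold step; split <;> simp_all

lemma step_nodup {z : List V} (hz : z.Nodup) (a : V) : (step z a).Nodup := by
  unfold step; split
  · exact hz
  · have h' : a ∉ z := by assumption
    simp [List.nodup_append, hz]; intro b hb hba; exact h' (hba ▸ hb)

noncomputable def P (G : SimpleGraph V) : List V → List V → ℕ
  | _, [] => 1
  | z, a :: t => beta G (step z a) * P G (step z a) t

lemma P_congr {z z' : List V} (h : ∀ u, u ∈ z ↔ u ∈ z') (l : List V) :
    P G z l = P G z' l := by
  induction l generalizing z z' with
  | nil => rfl
  | cons a t ih =>
    have hst : ∀ u, u ∈ step z a ↔ u ∈ step z' a := by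
      intro u; rw [mem_step, mem_step, h]
    show beta G (step z a) * P G (step z a) t = beta G (step z' a) * P G (step z' a) t
    rw [beta_congr G hst, ih hst]

noncomputable def F (G : SimpleGraph V) : ℕ → List V → ℕ
  | 0, _ => 1
  | n+1, z => z.length * beta G z * F G n z +
      ∑ a ∈ Finset.univ.filter (· ∉ z), beta G (z ++ [a]) * F G n (z ++ [a])

lemma sumP (n : ℕ) (z₀ : List V) (hz : z₀.Nodup) :
    ∑ y : Fin n → V, P G z₀ (List.ofFn y) = F G n z₀ := by
  induction n generalizing z₀ with
  | zero =>
    simp [P, F]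
  | succ n ih =>
    rw [← Equiv.sum_comp (Fin.consEquiv fun _ => V) (fun y => P G z₀ (List.ofFn y))]
    have h1 : ∀ q : V × (Fin n → V),
        P G z₀ (List.ofFn ((Fin.consEquiv fun _ => V) q)) =
          beta G (step z₀ q.1) * P G (step z₀ q.1) (List.ofFn q.2) := by
      rintro ⟨a, y⟩
      have : List.ofFn ((Fin.consEquiv fun _ => V) (a, y)) = a :: List.ofFn y := by
        rw [List.ofFn_succ]
        simp [Fin.consEquiv]
      rw [this]; rfl
    rw [Fintype.sum_congr _ _ h1, Fintype.sum_prod_type]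
    have h2 : ∀ a : V, ∑ y : Fin n → V,
        beta G (step z₀ a) * P G (step z₀ a) (List.ofFn y) =
          beta G (step z₀ a) * F G n (step z₀ a) := by
      intro a
      rw [← Finset.mul_sum, ih _ (step_nodup hz a)]
    rw [Fintype.sum_congr _ _ h2]
    rw [← Finset.sum_filter_add_sum_filter_not Finset.univ (· ∈ z₀)]
    have h3 : ∀ a ∈ Finset.univ.filter (· ∈ z₀),
        beta G (step z₀ a) * F G n (step z₀ a) = beta G z₀ * F G n z₀ := by
      intro a ha
      simp only [Finset.mem_filter] at ha
      rw [step, if_pos ha.2]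
    rw [Finset.sum_congr rfl h3, Finset.sum_const]
    have hcard : (Finset.univ.filter (· ∈ z₀)).card = z₀.length := by
      rw [← List.toFinset_card_of_nodup hz]
      congr 1
      ext a; simp
    have h4 : ∀ a ∈ Finset.univ.filter (· ∉ z₀),
        beta G (step z₀ a) * F G n (step z₀ a) = beta G (z₀ ++ [a]) * F G n (z₀ ++ [a]) := by
      intro a ha
      simp only [Finset.mem_filter] at ha
      rw [step, if_neg ha.2]
    rw [Finset.sum_congr rfl h4]
    show _ = z₀.length * beta G z₀ * F G n z₀ + _
    rw [hcard, smul_eq_mul, mul_assoc]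

lemma lhs_eq (p : ℕ) :
    Nat.card {w : List V // SS G p w} =
      ∑ y : Fin p → V, ∏ i : Fin p, beta G ((List.ofFn y).take ((i : ℕ) + 1)) := by
  have hlen : ∀ x y : Fin p → V, (List.ofFn x ++ List.ofFn y).length = 2 * p := by
    intro x y; simp; ring
  have hgetl : ∀ (x y : Fin p → V) (i : Fin p),
      (List.ofFn x ++ List.ofFn y).getD (i : ℕ) default = x i := by
    intro x y i
    have h1 : (i : ℕ) < (List.ofFn x ++ List.ofFn y).length := by rw [hlen]; omega
    rw [List.getD_eq_getElem _ _ h1, List.getElem_append_left (by simp)]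
    simp
  have hgetr : ∀ (x y : Fin p → V) (k : Fin p),
      (List.ofFn x ++ List.ofFn y).getD (p + (k : ℕ)) default = y k := by
    intro x y k
    have h1 : p + (k : ℕ) < (List.ofFn x ++ List.ofFn y).length := by rw [hlen]; omega
    rw [List.getD_eq_getElem _ _ h1,
      List.getElem_append_right (by simp)]
    simp
  have e1 : {w : List V // SS G p w} ≃
      {q : (Fin p → V) × (Fin p → V) //
        ∀ i k : Fin p, (k : ℕ) ≤ (i : ℕ) → ¬ G.Adj (q.2 i) (q.1 k)} := by
    refine ⟨fun w => ⟨((fun k => w.1.getD (p + (k : ℕ)) default),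
        (fun i => w.1.getD (i : ℕ) default)), ?_⟩,
      fun q => ⟨List.ofFn q.1.2 ++ List.ofFn q.1.1, ?_, ?_⟩, ?_, ?_⟩
    · intro i k hk
      exact w.2.2 i (p + k) i.isLt (by omega) (by omega)
    · exact hlen _ _
    · intro i j hi hj hij
      have hji : j - p < p := by omega
      have h1 : (List.ofFn q.1.2 ++ List.ofFn q.1.1).getD i default = q.1.2 ⟨i, hi⟩ :=
        hgetl _ _ ⟨i, hi⟩
      have h2 : (List.ofFn q.1.2 ++ List.ofFn q.1.1).getD j default = q.1.1 ⟨j - p, hji⟩ := by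
        have := hgetr q.1.2 q.1.1 ⟨j - p, hji⟩
        rwa [show p + (j - p) = j by omega] at this
      rw [h1, h2]
      exact q.2 ⟨i, hi⟩ ⟨j - p, hji⟩ (by simp; omega)
    · rintro ⟨w, hw⟩
      apply Subtype.ext
      apply List.ext_getElem (by simp [hw.1]; ring)
      intro i h1 h2
      by_cases hi : i < p
      · have := hgetl (fun i => w.getD (i : ℕ) default) (fun k => w.getD (p + (k : ℕ)) default)
          ⟨i, hi⟩
        simp only [List.getD_eq_getElem _ _ h1] at this ⊢
        simp only [List.getD_eq_getElem _ _ h2] at this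
        exact this
      · have hip : i - p < p := by rw [hw.1] at h2; omega
        have := hgetr (fun i => w.getD (i : ℕ) default) (fun k => w.getD (p + (k : ℕ)) default)
          ⟨i - p, hip⟩
        simp only [show p + (i - p) = i by omega] at this
        simp only [List.getD_eq_getElem _ _ h1] at this ⊢
        simp only [List.getD_eq_getElem _ _ h2] at this
        exact this
    · rintro ⟨⟨y, x⟩, hq⟩
      apply Subtype.ext
      ext1 <;> [skip; skip] <;> funext k
      · exact hgetr x y k
      · exact hgetl x y k
  rw [Nat.card_congr e1]
  have e2 : {q : (Fin p → V) × (Fin p → V) //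
        ∀ i k : Fin p, (k : ℕ) ≤ (i : ℕ) → ¬ G.Adj (q.2 i) (q.1 k)} ≃
      (y : Fin p → V) × {x : Fin p → V // ∀ i k : Fin p, (k : ℕ) ≤ (i : ℕ) → ¬ G.Adj (x i) (y k)} :=
    Equiv.subtypeProdEquivSigmaSubtype
      (fun (y : Fin p → V) (x : Fin p → V) => ∀ i k : Fin p, (k : ℕ) ≤ (i : ℕ) → ¬ G.Adj (x i) (y k))
  rw [Nat.card_congr e2, Nat.card_eq_fintype_card, Fintype.card_sigma]
  simp only [← Nat.card_eq_fintype_card]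
  apply Fintype.sum_congr
  intro y
  have e3 : {x : Fin p → V // ∀ i k : Fin p, (k : ℕ) ≤ (i : ℕ) → ¬ G.Adj (x i) (y k)} ≃
      ∀ i : Fin p, {v : V // ∀ k : Fin p, (k : ℕ) ≤ (i : ℕ) → ¬ G.Adj v (y k)} :=
    Equiv.subtypePiEquivPi (p := fun (i : Fin p) (v : V) => ∀ k : Fin p, (k : ℕ) ≤ (i : ℕ) → ¬ G.Adj v (y k))
  rw [Nat.card_congr e3, Nat.card_pi]
  apply Finset.prod_congr rfl
  intro i _
  apply Nat.card_congr
  apply Equiv.subtypeEquivRight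
  intro v
  constructor
  · intro hv u hu
    rw [List.mem_take_iff_getElem] at hu
    obtain ⟨j, hj, hju⟩ := hu
    simp only [List.getElem_take, List.length_ofFn] at hj hju
    have hjp : j < p := by omega
    rw [List.getElem_ofFn] at hju
    rw [← hju]
    exact hv ⟨j, hjp⟩ (by simp; omega)
  · intro hv k hk
    apply hv
    rw [List.mem_take_iff_getElem]
    refine ⟨(k : ℕ), by simp; omega, ?_⟩
    simp [List.getElem_take]

lemma prod_P (l : List V) (z₀ : List V) :
    ∏ i ∈ Finset.range l.length, beta G (z₀ ++ l.take (i + 1)) = P G z₀ l := by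
  induction l generalizing z₀ with
  | nil => rfl
  | cons a t ih =>
    show ∏ i ∈ Finset.range (t.length + 1), beta G (z₀ ++ (a :: t).take (i + 1)) = _
    rw [Finset.prod_range_succ']
    have h1 : ∀ i, z₀ ++ (a :: t).take (i + 1 + 1) = (z₀ ++ [a]) ++ t.take (i + 1) := by
      intro i
      simp [List.take_succ_cons]
    have h2 : z₀ ++ (a :: t).take (0 + 1) = z₀ ++ [a] := by simp
    simp only [h1, h2]
    rw [ih]
    have hmem : ∀ u, u ∈ z₀ ++ [a] ↔ u ∈ step z₀ a := by
      intro u; rw [mem_step]; simp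
    show _ = beta G (step z₀ a) * P G (step z₀ a) t
    rw [P_congr G hmem, beta_congr G hmem, mul_comm]

lemma prod_fin (p : ℕ) (y : Fin p → V) :
    ∏ i : Fin p, beta G ((List.ofFn y).take ((i : ℕ) + 1)) = P G [] (List.ofFn y) := by
  rw [Fin.prod_univ_eq_prod_range (fun i => beta G ((List.ofFn y).take (i + 1))) p]
  rw [← prod_P G (List.ofFn y) []]
  simp

def cnt (j : ℕ) (s : Finset ℕ) (m : ℕ) : ℕ := j + (s.filter (· ≤ m)).card

noncomputable def W (G : SimpleGraph V) (off n j : ℕ) (z : List V) (s : Finset ℕ) : ℕ :=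
  ∏ m ∈ Finset.Icc (off+1) (off+n),
    (if m ∈ s then 1 else cnt j s m) * beta G (z.take (cnt j s m))

noncomputable def H (G : SimpleGraph V) (off n : ℕ) (z₀ : List V) : ℕ :=
  ∑ e ∈ (NL V).filter (fun e => (z₀ ++ e).Nodup),
    ∑ s ∈ (Finset.Icc (off+1) (off+n)).powersetCard e.length,
      W G off n z₀.length (z₀ ++ e) s

lemma sum_powersetCard_insert {a : ℕ} {t : Finset ℕ} (ha : a ∉ t) (k : ℕ) (f : Finset ℕ → ℕ) :
    ∑ s ∈ (insert a t).powersetCard (k+1), f s =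
      ∑ s ∈ t.powersetCard (k+1), f s + ∑ s ∈ t.powersetCard k, f (insert a s) := by
  rw [Finset.powersetCard_succ_insert ha, Finset.sum_union, Finset.sum_image]
  · intro s hs s' hs' hss
    have h1 : a ∉ s := fun h => ha ((Finset.mem_powersetCard.1 hs).1 h)
    have h2 : a ∉ s' := fun h => ha ((Finset.mem_powersetCard.1 hs').1 h)
    rw [← Finset.erase_insert h1, ← Finset.erase_insert h2, hss]
  · rw [Finset.disjoint_left]
    intro s hs hs'
    have h1 : a ∉ s := fun h => ha ((Finset.mem_powersetCard.1 hs).1 h)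
    obtain ⟨s', _, rfl⟩ := Finset.mem_image.1 hs'
    exact h1 (Finset.mem_insert_self a s')

lemma cons_decomp (z₀ : List V) (hz : z₀.Nodup) (g : List V → ℕ) :
    ∑ e ∈ (NL V).filter (fun e => (z₀ ++ e).Nodup), g e =
      g [] + ∑ a ∈ Finset.univ.filter (· ∉ z₀),
        ∑ e ∈ (NL V).filter (fun e => ((z₀ ++ [a]) ++ e).Nodup), g (a :: e) := by
  have hnil : [] ∈ (NL V).filter (fun e => (z₀ ++ e).Nodup) := by
    simp [mem_NL, hz]
  rw [← Finset.add_sum_erase _ g hnil]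
  congr 1
  rw [Finset.sum_sigma']
  refine Finset.sum_nbij' (i := fun e => (⟨e.headI, e.tail⟩ : Σ _ : V, List V))
    (j := fun x => x.1 :: x.2) ?_ ?_ ?_ ?_ ?_
  · rintro (_ | ⟨b, t⟩) he
    · simp at he
    · simp only [Finset.mem_erase, Finset.mem_filter, mem_NL] at he
      simp only [List.headI, List.tail, Finset.mem_sigma, Finset.mem_filter, mem_NL,
        Finset.mem_univ, true_and]
      have h2 : (z₀ ++ [b] ++ t).Nodup := by simpa using he.2.2
      have h3 : b ∉ z₀ := by
        have := he.2.2
        simp [List.nodup_append] at this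
        exact fun hb => (this.2.2 b hb).1 rfl
      refine ⟨h3, ?_, h2⟩
      have := h2
      simp [List.nodup_append] at this
      exact this.2.1.2
  · rintro ⟨a, e⟩ hx
    simp only [Finset.mem_sigma, Finset.mem_filter, mem_NL, Finset.mem_univ, true_and] at hx
    simp only [Finset.mem_erase, Finset.mem_filter, mem_NL]
    refine ⟨by simp, ?_, by simpa using hx.2.2⟩
    have := hx.2.2
    simp [List.nodup_append] at this ⊢
    tauto
  · rintro (_ | ⟨b, t⟩) he
    · simp at he
    · rfl
  · rintro ⟨a, e⟩ _
    rfl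
  · rintro (_ | ⟨b, t⟩) he
    · simp at he
    · rfl

lemma H_zero (off : ℕ) (z₀ : List V) (hz : z₀.Nodup) : H G off 0 z₀ = 1 := by
  unfold H
  have hIcc : Finset.Icc (off+1) (off+0) = ∅ := by
    apply Finset.Icc_eq_empty; omega
  rw [Finset.sum_eq_single_of_mem ([] : List V) (by simp [mem_NL, hz])]
  · simp [W, hIcc]
  · intro e he hne
    have hlen : e.length ≠ 0 := by simpa [List.length_eq_zero_iff] using hne
    rw [hIcc, Finset.powersetCard_eq_empty.2 (by simp; omega), Finset.sum_empty]

lemma H_succ (off n : ℕ) (z₀ : List V) (hz : z₀.Nodup) :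
    H G off (n+1) z₀ = z₀.length * beta G z₀ * H G (off+1) n z₀ +
      ∑ a ∈ Finset.univ.filter (· ∉ z₀), beta G (z₀ ++ [a]) * H G (off+1) n (z₀ ++ [a]) := by
  have hsplit : Finset.Icc (off+1) (off+(n+1)) =
      insert (off+1) (Finset.Icc (off+1+1) (off+1+n)) := by
    ext x; simp; omega
  have hni : (off+1) ∉ Finset.Icc (off+1+1) (off+1+n) := by simp
  -- Fact A
  have WA : ∀ (e : List V) (s : Finset ℕ), s ⊆ Finset.Icc (off+1+1) (off+1+n) →
      W G off (n+1) z₀.length (z₀ ++ e) s =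
        (z₀.length * beta G z₀) * W G (off+1) n z₀.length (z₀ ++ e) s := by
    intro e s hs
    unfold W
    rw [hsplit, Finset.prod_insert hni]
    have h1 : (off+1) ∉ s := fun h => by have := hs h; simp at this
    have h2 : s.filter (· ≤ off+1) = ∅ := by
      apply Finset.filter_eq_empty_iff.2
      intro x hx; have := hs hx; simp at this; omega
    rw [if_neg h1]
    have h3 : cnt z₀.length s (off+1) = z₀.length := by simp [cnt, h2]
    rw [h3, List.take_left]
  -- Fact B
  have WB : ∀ (a : V) (e' : List V) (s : Finset ℕ),
      s ⊆ Finset.Icc (off+1+1) (off+1+n) →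
      W G off (n+1) z₀.length (z₀ ++ a :: e') (insert (off+1) s) =
        beta G (z₀ ++ [a]) * W G (off+1) n (z₀.length + 1) (z₀ ++ a :: e') s := by
    intro a e' s hs
    unfold W
    rw [hsplit, Finset.prod_insert hni]
    have hns : (off+1) ∉ s := fun h => by have := hs h; simp at this
    have h1 : (insert (off+1) s).filter (· ≤ off+1) = {off+1} := by
      ext x
      simp only [Finset.mem_filter, Finset.mem_insert, Finset.mem_singleton]
      constructor
      · rintro ⟨h | h, hle⟩
        · exact h
        · have := hs h; simp at this; omega
      · rintro rfl; exact ⟨Or.inl rfl, le_refl _⟩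
    have h2 : cnt z₀.length (insert (off+1) s) (off+1) = z₀.length + 1 := by
      simp [cnt, h1]
    have h3 : (z₀ ++ a :: e').take (z₀.length + 1) = z₀ ++ [a] := by
      have : z₀ ++ a :: e' = (z₀ ++ [a]) ++ e' := by simp
      rw [this, show z₀.length + 1 = (z₀ ++ [a]).length by simp, List.take_left]
    rw [if_pos (Finset.mem_insert_self _ _), h2, h3, one_mul]
    congr 1
    apply Finset.prod_congr rfl
    intro m hm
    simp only [Finset.mem_Icc] at hm
    have hme : m ≠ off+1 := by omega
    have hmem : (m ∈ insert (off+1) s) = (m ∈ s) := by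
      simp [Finset.mem_insert, hme]
    have hcnt : cnt z₀.length (insert (off+1) s) m = cnt (z₀.length + 1) s m := by
      unfold cnt
      have hfil : (insert (off+1) s).filter (· ≤ m) = insert (off+1) (s.filter (· ≤ m)) := by
        ext x
        simp only [Finset.mem_filter, Finset.mem_insert]
        constructor
        · rintro ⟨h | h, hle⟩
          · exact Or.inl h
          · exact Or.inr ⟨h, hle⟩
        · rintro (rfl | ⟨h, hle⟩)
          · exact ⟨Or.inl rfl, by omega⟩
          · exact ⟨Or.inr h, hle⟩
      rw [hfil, Finset.card_insert_of_notMem (fun h => hns (Finset.mem_filter.1 h).1)]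
      omega
    rw [hcnt]
    congr 1
    exact if_congr (iff_of_eq hmem) rfl rfl
  -- main computation
  show (∑ e ∈ (NL V).filter (fun e => (z₀ ++ e).Nodup),
      ∑ s ∈ (Finset.Icc (off+1) (off+(n+1))).powersetCard e.length,
        W G off (n+1) z₀.length (z₀ ++ e) s) = _
  rw [cons_decomp z₀ hz]
  have hg_nil : ∑ s ∈ (Finset.Icc (off+1) (off+(n+1))).powersetCard (List.length ([] : List V)),
      W G off (n+1) z₀.length (z₀ ++ []) s =
      (z₀.length * beta G z₀) *
        ∑ s ∈ (Finset.Icc (off+1+1) (off+1+n)).powersetCard (List.length ([] : List V)),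
          W G (off+1) n z₀.length (z₀ ++ []) s := by
    rw [Finset.mul_sum]
    apply Finset.sum_congr
    · rw [hsplit]
      simp [Finset.powersetCard_zero]
    · intro s hs
      exact WA [] s (Finset.mem_powersetCard.1 hs).1
  rw [hg_nil]
  have key : ∀ a, a ∉ z₀ → ∀ e ∈ (NL V).filter (fun e => ((z₀ ++ [a]) ++ e).Nodup),
      (∑ s ∈ (Finset.Icc (off+1) (off+(n+1))).powersetCard (a :: e).length,
        W G off (n+1) z₀.length (z₀ ++ a :: e) s)
      = z₀.length * beta G z₀ *
          (∑ s ∈ (Finset.Icc (off+1+1) (off+1+n)).powersetCard (a :: e).length,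
            W G (off+1) n z₀.length (z₀ ++ a :: e) s)
        + beta G (z₀ ++ [a]) *
          (∑ s ∈ (Finset.Icc (off+1+1) (off+1+n)).powersetCard e.length,
            W G (off+1) n (z₀.length + 1) ((z₀ ++ [a]) ++ e) s) := by
    intro a ha e he
    simp only [List.length_cons]
    rw [hsplit, sum_powersetCard_insert hni e.length]
    congr 1
    · rw [Finset.mul_sum]
      apply Finset.sum_congr rfl
      intro s hs
      exact WA (a :: e) s (Finset.mem_powersetCard.1 hs).1
    · rw [Finset.mul_sum]
      apply Finset.sum_congr rfl
      intro s hs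
      rw [show (z₀ ++ [a]) ++ e = z₀ ++ a :: e by simp]
      exact WB a e s (Finset.mem_powersetCard.1 hs).1
  have hstep2 : ∀ a ∈ Finset.univ.filter (· ∉ z₀),
      (∑ e ∈ (NL V).filter (fun e => ((z₀ ++ [a]) ++ e).Nodup),
        ∑ s ∈ (Finset.Icc (off+1) (off+(n+1))).powersetCard (a :: e).length,
          W G off (n+1) z₀.length (z₀ ++ a :: e) s)
      = z₀.length * beta G z₀ *
          (∑ e ∈ (NL V).filter (fun e => ((z₀ ++ [a]) ++ e).Nodup),
            ∑ s ∈ (Finset.Icc (off+1+1) (off+1+n)).powersetCard (a :: e).length,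
              W G (off+1) n z₀.length (z₀ ++ a :: e) s)
        + beta G (z₀ ++ [a]) * H G (off+1) n (z₀ ++ [a]) := by
    intro a ha
    simp only [Finset.mem_filter, Finset.mem_univ, true_and] at ha
    rw [Finset.sum_congr rfl (key a ha), Finset.sum_add_distrib, ← Finset.mul_sum,
      ← Finset.mul_sum]
    congr 2
    unfold H
    simp only [show (z₀ ++ [a]).length = z₀.length + 1 by simp]
  rw [Finset.sum_congr rfl hstep2, Finset.sum_add_distrib, ← Finset.mul_sum]
  have hH : H G (off+1) n z₀ =
      (∑ s ∈ (Finset.Icc (off+1+1) (off+1+n)).powersetCard (List.length ([] : List V)),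
        W G (off+1) n z₀.length (z₀ ++ []) s)
      + ∑ a ∈ Finset.univ.filter (· ∉ z₀),
          ∑ e ∈ (NL V).filter (fun e => ((z₀ ++ [a]) ++ e).Nodup),
            ∑ s ∈ (Finset.Icc (off+1+1) (off+1+n)).powersetCard (a :: e).length,
              W G (off+1) n z₀.length (z₀ ++ a :: e) s := by
    unfold H
    exact cons_decomp z₀ hz _
  rw [hH]
  ring

lemma KS (p : ℕ) (z : List V) :
    ∀ (c : List ℕ) (a j : ℕ), (a :: c).Pairwise (· < ·) → (∀ x ∈ a :: c, x ≤ p) →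
    (∏ m ∈ Finset.Icc a p, (if m ∈ (a :: c) then 1 else j + ((a :: c).filter (· ≤ m)).length) *
        beta G (z.take (j + ((a :: c).filter (· ≤ m)).length)))
    = ∏ i ∈ Finset.range (c.length + 1),
        (j + i + 1) ^ (((a :: c) ++ [p+1]).getD (i+1) 0 - ((a :: c) ++ [p+1]).getD i 0 - 1) *
          beta G (z.take (j + i + 1)) ^
            (((a :: c) ++ [p+1]).getD (i+1) 0 - ((a :: c) ++ [p+1]).getD i 0) := by
  intro c
  induction c with
  | nil =>
    intro a j _ hle
    have hap : a ≤ p := hle a (by simp)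
    have hsplit : Finset.Icc a p = insert a (Finset.Icc (a+1) p) := by
      ext x; simp; omega
    have hni : a ∉ Finset.Icc (a+1) p := by simp
    rw [hsplit, Finset.prod_insert hni]
    have hfa : (([a] : List ℕ).filter (· ≤ a)).length = 1 := by simp
    have h0 : (if a ∈ [a] then 1 else j + (([a] : List ℕ).filter (· ≤ a)).length) = 1 := by
      simp
    rw [h0, hfa, one_mul]
    have hconst : ∀ m ∈ Finset.Icc (a+1) p,
        (if m ∈ [a] then 1 else j + (([a] : List ℕ).filter (· ≤ m)).length) *
          beta G (z.take (j + (([a] : List ℕ).filter (· ≤ m)).length)) =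
        (j + 1) * beta G (z.take (j + 1)) := by
      intro m hm
      simp only [Finset.mem_Icc] at hm
      have h1 : m ∉ [a] := by simp; omega
      have h2 : (([a] : List ℕ).filter (· ≤ m)).length = 1 := by
        have ham : a ≤ m := by omega
        simp [List.filter_singleton, ham]
      rw [if_neg h1, h2]
    rw [Finset.prod_congr rfl hconst, Finset.prod_const, Nat.card_Icc]
    rw [show Finset.range (List.length ([] : List ℕ) + 1) = Finset.range 1 from rfl,
      Finset.prod_range_one]
    have g1 : (([a] : List ℕ) ++ [p+1]).getD 1 0 = p + 1 := by rfl
    have g0 : (([a] : List ℕ) ++ [p+1]).getD 0 0 = a := by rfl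
    rw [g1, g0]
    have e1 : p + 1 - a - 1 = p + 1 - (a + 1) := by omega
    have e2 : p + 1 - a = (p + 1 - (a + 1)) + 1 := by omega
    rw [e1, e2, pow_succ, mul_pow]
    ring
  | cons b c' ih =>
    intro a j hpw hle
    have hab : a < b := (List.pairwise_cons.1 hpw).1 b (by simp)
    have hpw' : (b :: c').Pairwise (· < ·) := (List.pairwise_cons.1 hpw).2
    have hbc' : ∀ x ∈ c', b < x := fun x hx => (List.pairwise_cons.1 hpw').1 x hx
    have hac : ∀ x ∈ b :: c', a < x := (List.pairwise_cons.1 hpw).1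
    have hbp : b ≤ p := hle b (by simp)
    have hle' : ∀ x ∈ b :: c', x ≤ p := fun x hx => hle x (List.mem_cons_of_mem a hx)
    -- split Icc a p into Ico a b and Icc b p
    have hsplit : Finset.Icc a p = (Finset.Ico a b) ∪ (Finset.Icc b p) := by
      ext x; simp; omega
    have hdisj : Disjoint (Finset.Ico a b) (Finset.Icc b p) := by
      rw [Finset.disjoint_left]; intro x hx hx'; simp at hx hx'; omega
    rw [hsplit, Finset.prod_union hdisj]
    -- first block
    have hblock1 : ∏ m ∈ Finset.Ico a b,
        (if m ∈ (a :: b :: c') then 1 else j + ((a :: b :: c').filter (· ≤ m)).length) *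
          beta G (z.take (j + ((a :: b :: c').filter (· ≤ m)).length)) =
        (j + 1) ^ (b - a - 1) * beta G (z.take (j + 1)) ^ (b - a) := by
      have hsp2 : Finset.Ico a b = insert a (Finset.Ico (a+1) b) := by
        ext x; simp; omega
      have hni : a ∉ Finset.Ico (a+1) b := by simp
      rw [hsp2, Finset.prod_insert hni]
      have hfa : ((a :: b :: c').filter (· ≤ a)).length = 1 := by
        have hnil : (b :: c').filter (· ≤ a) = [] := by
          apply List.filter_eq_nil_iff.2
          intro x hx
          simp only [decide_eq_true_eq]
          exact not_le.2 (hac x hx)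
        rw [show ((a :: b :: c').filter (· ≤ a)) = a :: ((b :: c').filter (· ≤ a)) from
          List.filter_cons_of_pos (by simp), hnil]
        rfl
      have h0 : (if a ∈ (a :: b :: c') then 1 else
          j + ((a :: b :: c').filter (· ≤ a)).length) = 1 := by simp
      rw [h0, hfa, one_mul]
      have hconst : ∀ m ∈ Finset.Ico (a+1) b,
          (if m ∈ (a :: b :: c') then 1 else j + ((a :: b :: c').filter (· ≤ m)).length) *
            beta G (z.take (j + ((a :: b :: c').filter (· ≤ m)).length)) =
          (j + 1) * beta G (z.take (j + 1)) := by
        intro m hm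
        simp only [Finset.mem_Ico] at hm
        have h1 : m ∉ (a :: b :: c') := by
          simp only [List.mem_cons, not_or]
          refine ⟨by omega, by omega, fun hm' => ?_⟩
          have := hbc' m hm'; omega
        have h2 : ((a :: b :: c').filter (· ≤ m)).length = 1 := by
          have hb : (b :: c').filter (· ≤ m) = [] := by
            apply List.filter_eq_nil_iff.2
            intro x hx
            simp only [decide_eq_true_eq]
            have hbx : b ≤ x := by
              rcases List.mem_cons.1 hx with rfl | hx'
              · omega
              · exact le_of_lt (hbc' x hx')
            omega
          rw [show ((a :: b :: c').filter (· ≤ m)) = a :: ((b :: c').filter (· ≤ m)) from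
            List.filter_cons_of_pos (by simp; omega), hb]
          rfl
        rw [if_neg h1, h2]
      rw [Finset.prod_congr rfl hconst, Finset.prod_const, Nat.card_Ico]
      have e2 : b - a = (b - (a+1)) + 1 := by omega
      have e1 : b - a - 1 = b - (a + 1) := by omega
      rw [e1, e2, pow_succ, mul_pow]
      ring
    rw [hblock1]
    -- second block via ih
    have hblock2 : ∏ m ∈ Finset.Icc b p,
        (if m ∈ (a :: b :: c') then 1 else j + ((a :: b :: c').filter (· ≤ m)).length) *
          beta G (z.take (j + ((a :: b :: c').filter (· ≤ m)).length)) =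
        ∏ m ∈ Finset.Icc b p,
          (if m ∈ (b :: c') then 1 else (j+1) + ((b :: c').filter (· ≤ m)).length) *
            beta G (z.take ((j+1) + ((b :: c').filter (· ≤ m)).length)) := by
      apply Finset.prod_congr rfl
      intro m hm
      simp only [Finset.mem_Icc] at hm
      have hma : m ≠ a := by omega
      have hmem : (m ∈ (a :: b :: c')) ↔ (m ∈ (b :: c')) := by
        rw [List.mem_cons]
        exact or_iff_right hma
      have hflt : ((a :: b :: c').filter (· ≤ m)).length =
          ((b :: c').filter (· ≤ m)).length + 1 := by
        rw [show ((a :: b :: c').filter (· ≤ m)) = a :: ((b :: c').filter (· ≤ m)) from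
          List.filter_cons_of_pos (by simp; omega)]
        rfl
      rw [hflt, show j + (((b :: c').filter (· ≤ m)).length + 1) =
        (j+1) + ((b :: c').filter (· ≤ m)).length by omega]
      congr 1
      exact if_congr hmem rfl rfl
    rw [hblock2, ih b (j+1) hpw' hle']
    simp only [List.length_cons]
    conv_rhs => rw [Finset.prod_range_succ']
    rw [mul_comm ((j + 1) ^ (b - a - 1) * beta G (z.take (j + 1)) ^ (b - a))]
    congr 1
    · apply Finset.prod_congr rfl
      intro i _
      simp only [List.cons_append, List.getD_cons_succ]
      rw [show j + (i + 1) + 1 = j + 1 + i + 1 by omega]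

lemma sort_filter_length (s₁ : Finset ℕ) (m : ℕ) :
    ((s₁.sort (· ≤ ·)).filter (· ≤ m)).length = (s₁.filter (· ≤ m)).card := by
  have hnd : ((s₁.sort (· ≤ ·)).filter (· ≤ m)).Nodup := (Finset.sort_nodup _ _).filter _
  rw [← List.toFinset_card_of_nodup hnd]
  congr 1
  ext x
  simp [List.mem_filter]

lemma bridge (p : ℕ) (hp : 0 < p) (z : List V) (hz : z ≠ []) (s : Finset ℕ)
    (hs : s ∈ (Finset.Icc 2 p).powersetCard (z.length - 1)) :
    W G 0 p 0 z (insert 1 s) =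
      ∏ i ∈ Finset.range z.length,
        (i + 1) ^ ((kseq p s).getD (i + 1) 0 - (kseq p s).getD i 0 - 1) *
          beta G (z.take (i + 1)) ^ ((kseq p s).getD (i + 1) 0 - (kseq p s).getD i 0) := by
  obtain ⟨hsub, hcard⟩ := Finset.mem_powersetCard.1 hs
  have hsub' : ∀ x ∈ s, 2 ≤ x ∧ x ≤ p := by
    intro x hx; have := hsub hx; simpa using this
  have h1s : (1 : ℕ) ∉ s := fun h => by have := (hsub' 1 h).1; omega
  set c := s.sort (· ≤ ·) with hc
  have hmemc : ∀ x, x ∈ c ↔ x ∈ s := fun x => Finset.mem_sort _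
  have hstep : ∀ m ∈ Finset.Icc (0+1) (0+p),
      (if m ∈ insert 1 s then 1 else cnt 0 (insert 1 s) m) *
        beta G (z.take (cnt 0 (insert 1 s) m)) =
      (if m ∈ (1 :: c) then 1 else 0 + ((1 :: c).filter (· ≤ m)).length) *
        beta G (z.take (0 + ((1 :: c).filter (· ≤ m)).length)) := by
    intro m hm
    simp only [Finset.mem_Icc] at hm
    have h1m : 1 ≤ m := by omega
    have hmem : (m ∈ insert 1 s) ↔ (m ∈ (1 :: c)) := by
      simp [hmemc]
    have hcnt : cnt 0 (insert 1 s) m = 0 + ((1 :: c).filter (· ≤ m)).length := by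
      unfold cnt
      have hf : (insert 1 s).filter (· ≤ m) = insert 1 (s.filter (· ≤ m)) := by
        ext x
        simp only [Finset.mem_filter, Finset.mem_insert]
        constructor
        · rintro ⟨rfl | h, hle⟩
          · exact Or.inl rfl
          · exact Or.inr ⟨h, hle⟩
        · rintro (rfl | ⟨h, hle⟩)
          · exact ⟨Or.inl rfl, h1m⟩
          · exact ⟨Or.inr h, hle⟩
      have h1f : (1 : ℕ) ∉ s.filter (· ≤ m) := fun h => h1s (Finset.mem_filter.1 h).1
      have hlf : ((1 :: c).filter (· ≤ m)) = 1 :: (c.filter (· ≤ m)) :=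
        List.filter_cons_of_pos (by simpa using h1m)
      have hlen2 : ((1 :: c).filter (· ≤ m)).length = (s.filter (· ≤ m)).card + 1 := by
        rw [hlf, List.length_cons, hc, sort_filter_length]
      rw [hf, Finset.card_insert_of_notMem h1f, hlen2]
    rw [hcnt]
    congr 1
    exact if_congr hmem rfl rfl
  have hW : W G 0 p 0 z (insert 1 s) = ∏ m ∈ Finset.Icc (0+1) (0+p),
      ((if m ∈ (1 :: c) then 1 else 0 + ((1 :: c).filter (· ≤ m)).length) *
        beta G (z.take (0 + ((1 :: c).filter (· ≤ m)).length))) := Finset.prod_congr rfl hstep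
  rw [hW]
  have hpw : (1 :: c).Pairwise (· < ·) := by
    refine List.Pairwise.cons ?_ (Finset.sortedLT_sort s).pairwise
    intro x hx
    have := (hsub' x ((hmemc x).1 hx)).1; omega
  have hle : ∀ x ∈ (1 :: c), x ≤ p := by
    intro x hx
    rcases List.mem_cons.1 hx with rfl | hx'
    · omega
    · exact (hsub' x ((hmemc x).1 hx')).2
  have hKS := KS G p z c 1 0 hpw hle
  have hclen : c.length + 1 = z.length := by
    have h1 : c.length = s.card := Finset.length_sort _
    have hzpos : 0 < z.length := List.length_pos_iff.2 hz
    omega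
  simp only [Nat.zero_add] at hKS ⊢
  rw [hKS, hclen]
  rfl

lemma F_eq_H (n : ℕ) : ∀ (off : ℕ) (z₀ : List V), z₀.Nodup → F G n z₀ = H G off n z₀ := by
  induction n with
  | zero => intro off z₀ hz; rw [H_zero G off z₀ hz]; rfl
  | succ n ih =>
    intro off z₀ hz
    rw [H_succ G off n z₀ hz]
    show z₀.length * beta G z₀ * F G n z₀ + _ = _
    rw [ih (off+1) z₀ hz]
    congr 1
    apply Finset.sum_congr rfl
    intro a ha
    simp only [Finset.mem_filter, Finset.mem_univ, true_and] at ha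
    rw [ih (off+1) (z₀ ++ [a]) (by simp [List.nodup_append, hz, ha]; intro b hb hba; exact ha (hba ▸ hb))]

-- W is zero if 1 is "missing"

lemma W_zero_one (p : ℕ) (hp : 0 < p) (e : List V) (s : Finset ℕ)
    (hs : ∀ x ∈ s, 2 ≤ x) : W G 0 p 0 e s = 0 := by
  unfold W
  apply Finset.prod_eq_zero (i := 1) (by simp; omega)
  have h1 : (1 : ℕ) ∉ s := fun h => by have := hs 1 h; omega
  have h2 : s.filter (· ≤ 1) = ∅ := by
    apply Finset.filter_eq_empty_iff.2
    intro x hx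
    have := hs x hx
    simp; omega
  rw [if_neg h1]
  simp [cnt, h2]

lemma W_zero_beta (p : ℕ) (hp : 0 < p) (e : List V) (he : e ≠ [])
    (hbeta : beta G e = 0) (s : Finset ℕ)
    (hs : s ∈ (Finset.Icc 2 p).powersetCard (e.length - 1)) :
    W G 0 p 0 e (insert 1 s) = 0 := by
  obtain ⟨hsub, hcard⟩ := Finset.mem_powersetCard.1 hs
  unfold W
  apply Finset.prod_eq_zero (i := p) (by simp; omega)
  have hfil : (insert 1 s).filter (· ≤ p) = insert 1 s := by
    apply Finset.filter_true_of_mem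
    intro x hx
    rcases Finset.mem_insert.1 hx with rfl | hx'
    · omega
    · have := hsub hx'; simp at this ⊢; omega
  have h1s : (1:ℕ) ∉ s := fun h => by have := hsub h; simp at this
  have hcnt : cnt 0 (insert 1 s) p = e.length := by
    unfold cnt
    rw [hfil, Finset.card_insert_of_notMem h1s, hcard]
    have : 0 < e.length := List.length_pos_iff.2 he
    omega
  rw [hcnt, List.take_length, hbeta, mul_zero]

lemma rhs_eq (p : ℕ) (hp : 0 < p) :
    H G 0 p [] = ∑ z : {l : List V // l.Nodup},
      (if z.1 ≠ [] ∧ ∃ v : V, ∀ u ∈ z.1, ¬ G.Adj v u then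
        ∑ s ∈ (Finset.Icc 2 p).powersetCard (z.1.length - 1),
          ∏ i ∈ Finset.range z.1.length,
            (i + 1) ^ ((kseq p s).getD (i + 1) 0 - (kseq p s).getD i 0 - 1) *
              beta G (z.1.take (i + 1)) ^
                ((kseq p s).getD (i + 1) 0 - (kseq p s).getD i 0)
      else 0) := by
  unfold H
  have hfilter : (NL V).filter (fun e => (([] : List V) ++ e).Nodup) = NL V := by
    apply Finset.filter_true_of_mem
    intro e he
    simpa using (mem_NL e).1 he
  rw [hfilter]
  rw [show NL V = Finset.univ.map (Function.Embedding.subtype (fun l : List V => l.Nodup))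
    from rfl, Finset.sum_map]
  apply Finset.sum_congr rfl
  rintro ⟨e, he⟩ _
  simp only [Function.Embedding.coe_subtype]
  show (∑ s ∈ (Finset.Icc (0+1) (0+p)).powersetCard e.length,
      W G 0 p (List.length ([] : List V)) ([] ++ e) s) = _
  simp only [List.nil_append, List.length_nil]
  by_cases hnil : e = []
  · subst hnil
    rw [if_neg (by simp)]
    simp only [List.length_nil, Finset.powersetCard_zero, Finset.sum_singleton]
    exact W_zero_one G p hp [] ∅ (by simp)
  · -- e ≠ []
    have hIcc : Finset.Icc (0+1) (0+p) = insert 1 (Finset.Icc 2 p) := by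
      ext x; simp; omega
    have h1ni : (1:ℕ) ∉ Finset.Icc 2 p := by simp
    have hlen : e.length = (e.length - 1) + 1 := by
      have : 0 < e.length := List.length_pos_iff.2 hnil
      omega
    conv_lhs => rw [hIcc, hlen]
    rw [sum_powersetCard_insert h1ni]
    have hzero1 : ∑ s ∈ (Finset.Icc 2 p).powersetCard (e.length - 1 + 1),
        W G 0 p 0 e s = 0 := by
      apply Finset.sum_eq_zero
      intro s hs
      exact W_zero_one G p hp e s
        (fun x hx => by have := (Finset.mem_powersetCard.1 hs).1 hx; simp at this; omega)
    rw [hzero1, zero_add]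
    by_cases hguard : ∃ v : V, ∀ u ∈ e, ¬ G.Adj v u
    · rw [if_pos ⟨hnil, hguard⟩]
      apply Finset.sum_congr rfl
      intro s hs
      exact bridge G p hp e hnil s hs
    · rw [if_neg (by tauto)]
      apply Finset.sum_eq_zero
      intro s hs
      exact W_zero_beta G p hp e hnil (beta_eq_zero G hguard) s hs

end Aux

/-- Counting formula: `N(G,p)` equals the sum, over all traces `z` (words with pairwise
distinct letters whose letter set `U` satisfies `E(U) ≠ 𝕍`) and all sequences
`1 = k₁ < ⋯ < k_l < k_{l+1} = p+1`, of `∏_{i=1}^{l} i^{k_{i+1}−k_i−1} β(z₁⋯z_i)^{k_{i+1}−k_i}`. -/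
theorem stmt16 {V : Type*} [Fintype V] [Inhabited V] [DecidableEq V] (G : SimpleGraph V)
    (p : ℕ) (hp : 0 < p) :
    Nat.card {w : List V // SS G p w} =
      ∑ z : {l : List V // l.Nodup},
        (if z.1 ≠ [] ∧ ∃ v : V, ∀ u ∈ z.1, ¬ G.Adj v u then
          ∑ s ∈ (Finset.Icc 2 p).powersetCard (z.1.length - 1),
            ∏ i ∈ Finset.range z.1.length,
              (i + 1) ^ ((kseq p s).getD (i + 1) 0 - (kseq p s).getD i 0 - 1) *
                beta G (z.1.take (i + 1)) ^
                  ((kseq p s).getD (i + 1) 0 - (kseq p s).getD i 0)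
        else 0) := by
  rw [lhs_eq G p]
  rw [Fintype.sum_congr _ _ (fun y : Fin p → V => prod_fin G p y)]
  rw [sumP G p [] List.nodup_nil]
  rw [F_eq_H G p 0 [] List.nodup_nil]
  exact rhs_eq G p hp
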